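/- Let H be a reduced, commutative, cancellative, atomic monoid and let m ∈ ℕ. Then c_{ad,m}(a) ≥ μ_{ad,m}(a) for every a ∈ H, and c_{ad,m}(H) = μ_{ad,m}(H). -/

import Mathlib

namespace CMR

variable {α : Type*} [CancelCommMonoid α]

/-- The factorization monoid `Z(H)`: the free abelian monoid over the set of atoms of `H`,
modeled as multisets of atoms. -/
abbrev Fac (α : Type*) [CancelCommMonoid α] : Type _ := Multiset {u : α // Irreducible u}

/-- The factorization homomorphism `π : Z(H) → H`. -/
def piF (z : Fac α) : α := (z.map Subtype.val).prod

/-- `Z a`: the set of factorizations of `a`. -/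
def Z (a : α) : Set (Fac α) := {z | piF z = a}

/-- `L a`: the set of lengths of `a`. -/
def L (a : α) : Set ℕ := {n | ∃ z ∈ Z a, Multiset.card z = n}

/-- `Zk a k`: the factorizations of `a` of length `k`. -/
def Zk (a : α) (k : ℕ) : Set (Fac α) := {z ∈ Z a | Multiset.card z = k}

/-- `ZM a M`: the factorizations of `a` whose length lies in `M`. -/
def ZM (a : α) (M : Set ℕ) : Set (Fac α) := {z ∈ Z a | Multiset.card z ∈ M}

/-- The distance between two factorizations:
`d(z,z') = max (|z / gcd(z,z')|, |z' / gcd(z,z')|)`. -/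
noncomputable def d (z z' : Fac α) : ℕ :=
  letI := Classical.decEq {u : α // Irreducible u}
  max (Multiset.card (z - z')) (Multiset.card (z' - z))

/-- The distance between two sets of factorizations, the minimum of pairwise
distances (with the convention `sInf ∅ = 0`). -/
noncomputable def dS (X Y : Set (Fac α)) : ℕ :=
  sInf {n : ℕ | ∃ x ∈ X, ∃ y ∈ Y, d x y = n}

/-- `k` and `l` are adjacent lengths of `a` (with `k < l`):
`L(a) ∩ [k, l] = {k, l}`. -/
def Adjacent (a : α) (k l : ℕ) : Prop :=
  k ∈ L a ∧ l ∈ L a ∧ k < l ∧ ∀ m ∈ L a, k ≤ m → m ≤ l → m = k ∨ m = l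

/-- A chain of factorizations of `a` from `z` to `z'` whose consecutive members
satisfy the step predicate `P`. -/
def Chain (a : α) (P : Fac α → Fac α → Prop) (z z' : Fac α) : Prop :=
  ∃ (n : ℕ) (c : Fin (n + 1) → Fac α),
    c 0 = z ∧ c (Fin.last n) = z' ∧ (∀ i, c i ∈ Z a) ∧
    ∀ i : Fin n, P (c i.castSucc) (c i.succ)

/-- The catenary degree of an element: the smallest `N ∈ ℕ∞` such that any two
factorizations of `a` are connected by an `N`-chain. -/
noncomputable def cat (a : α) : ℕ∞ :=
  sInf {N : ℕ∞ | ∀ z ∈ Z a, ∀ z' ∈ Z a,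
    Chain a (fun x y => (d x y : ℕ∞) ≤ N) z z'}

/-- The equal catenary degree of an element: the smallest `N ∈ ℕ∞` such that any two
factorizations of `a` of the same length are connected by an equal-length `N`-chain. -/
noncomputable def ceq (a : α) : ℕ∞ :=
  sInf {N : ℕ∞ | ∀ z ∈ Z a, ∀ z' ∈ Z a, Multiset.card z = Multiset.card z' →
    Chain a (fun x y => (d x y : ℕ∞) ≤ N ∧ Multiset.card x = Multiset.card y) z z'}

/-- The monotone catenary degree of an element: the smallest `N ∈ ℕ∞` such that any two
factorizations of `a` (ordered by length) are connected by a monotone `N`-chain. -/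
noncomputable def cmon (a : α) : ℕ∞ :=
  sInf {N : ℕ∞ | ∀ z ∈ Z a, ∀ z' ∈ Z a, Multiset.card z ≤ Multiset.card z' →
    Chain a (fun x y => (d x y : ℕ∞) ≤ N ∧ Multiset.card x ≤ Multiset.card y) z z'}

/-- The adjacent catenary degree of an element:
`c_adj(a) = sup{d(Z_k(a), Z_l(a)) : k, l ∈ L(a) adjacent}`. -/
noncomputable def cadj (a : α) : ℕ∞ :=
  sSup {r : ℕ∞ | ∃ k l : ℕ, Adjacent a k l ∧ r = (dS (Zk a k) (Zk a l) : ℕ∞)}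

noncomputable def catH (α : Type*) [CancelCommMonoid α] : ℕ∞ := ⨆ a : α, cat a
noncomputable def ceqH (α : Type*) [CancelCommMonoid α] : ℕ∞ := ⨆ a : α, ceq a
noncomputable def cmonH (α : Type*) [CancelCommMonoid α] : ℕ∞ := ⨆ a : α, cmon a
noncomputable def cadjH (α : Type*) [CancelCommMonoid α] : ℕ∞ := ⨆ a : α, cadj a

/-- `gcd(x, y) ≠ 1`: the two factorizations share an atom. -/
def RStep (x y : Fac α) : Prop := ∃ u, u ∈ x ∧ u ∈ y

/-- `z ≈ z'`: there is an `R`-chain concatenating `z` and `z'` in `Z a`. -/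
def RRel (a : α) (z z' : Fac α) : Prop := Chain a RStep z z'

/-- `z ≈_eq z'`: there is an equal-length `R`-chain concatenating `z` and `z'` in `Z a`. -/
def RRelEq (a : α) (z z' : Fac α) : Prop :=
  Chain a (fun x y => RStep x y ∧ Multiset.card x = Multiset.card y) z z'

/-- There is a monotone `R`-chain from `z` to `z'` in `Z a`. -/
def MonRChain (a : α) (z z' : Fac α) : Prop :=
  Chain a (fun x y => RStep x y ∧ Multiset.card x ≤ Multiset.card y) z z'

/-- `μ(a)`: the supremum, over the `R`-classes `ρ` of `Z a`, of the minimal length of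
an element of `ρ`. -/
noncomputable def mu (a : α) : ℕ∞ :=
  sSup {r : ℕ∞ | ∃ z ∈ Z a,
    r = ((sInf {n : ℕ | ∃ z', RRel a z z' ∧ Multiset.card z' = n} : ℕ) : ℕ∞)}

noncomputable def muH (α : Type*) [CancelCommMonoid α] : ℕ∞ := ⨆ a : α, mu a

/-- `μ_eq(a) = sup{k ∈ L(a) : Z_k(a) has more than one ≈_eq-class}`. -/
noncomputable def mueq (a : α) : ℕ∞ :=
  sSup {r : ℕ∞ | ∃ k ∈ L a,
    (∃ z ∈ Zk a k, ∃ z' ∈ Zk a k, ¬ RRelEq a z z') ∧ r = (k : ℕ∞)}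

noncomputable def mueqH (α : Type*) [CancelCommMonoid α] : ℕ∞ := ⨆ a : α, mueq a

/-- `μ_adj(a) = sup{k ∈ L(a) : d(Z_k(a), Z_l(a)) = k for the l ∈ L(a), l < k adjacent to k}`. -/
noncomputable def muadj (a : α) : ℕ∞ :=
  sSup {r : ℕ∞ | ∃ k ∈ L a,
    (∃ l : ℕ, Adjacent a l k ∧ dS (Zk a k) (Zk a l) = k) ∧ r = (k : ℕ∞)}

noncomputable def muadjH (α : Type*) [CancelCommMonoid α] : ℕ∞ := ⨆ a : α, muadj a

/-- The monoid of relations of `H`, as a subset of `Z(H) × Z(H)`. -/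
def relMon (α : Type*) [CancelCommMonoid α] : Set (Fac α × Fac α) :=
  {p | piF p.1 = piF p.2}

/-- The monoid of equal-length relations of `H`. -/
def relMonEq (α : Type*) [CancelCommMonoid α] : Set (Fac α × Fac α) :=
  {p | piF p.1 = piF p.2 ∧ Multiset.card p.1 = Multiset.card p.2}

/-- The monoid of monotone relations of `H`. -/
def relMonMon (α : Type*) [CancelCommMonoid α] : Set (Fac α × Fac α) :=
  {p | piF p.1 = piF p.2 ∧ Multiset.card p.1 ≤ Multiset.card p.2}

/-- `p` is an atom (irreducible element) of the reduced submonoid `S` of `Z(H) × Z(H)`. -/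
def IsAtomIn (S : Set (Fac α × Fac α)) (p : Fac α × Fac α) : Prop :=
  p ∈ S ∧ p ≠ 0 ∧ ∀ q ∈ S, ∀ r ∈ S, p = q + r → q = 0 ∨ r = 0

/-- `A_a(S) = A(S) ∩ (Z(a) × Z(a))`. -/
def AtomsAt (S : Set (Fac α × Fac α)) (a : α) : Set (Fac α × Fac α) :=
  {p | IsAtomIn S p ∧ p.1 ∈ Z a ∧ p.2 ∈ Z a}

/-- The tame degree `t(a, x)`. -/
noncomputable def tdeg (a : α) (x : Fac α) : ℕ∞ :=
  sInf {N : ℕ∞ | ∀ z ∈ Z a, (∃ w ∈ Z a, x ≤ w) →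
    ∃ z' ∈ Z a, x ≤ z' ∧ (d z z' : ℕ∞) ≤ N}

/-- The tame degree `t(H) = sup{t(a, u) : a ∈ H, u ∈ A(H)}`. -/
noncomputable def tH (α : Type*) [CancelCommMonoid α] : ℕ∞ :=
  ⨆ (a : α) (u : {u : α // Irreducible u}), tdeg a {u}

/-- The `m`-adjacent catenary degree of an element:
`c_{ad,m}(a) = sup{d(Z_k(a), Z_{[k-m,k)}(a)) : k ∈ L(a)}`. -/
noncomputable def cadm (m : ℕ) (a : α) : ℕ∞ :=
  sSup {r : ℕ∞ | ∃ k ∈ L a, r = (dS (Zk a k) (ZM a (Set.Ico (k - m) k)) : ℕ∞)}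

noncomputable def cadmH (α : Type*) [CancelCommMonoid α] (m : ℕ) : ℕ∞ := ⨆ a : α, cadm m a

/-- `μ_{ad,m}(a) = sup{k ∈ L(a) : d(Z_k(a), Z_{[k-m,k)}(a)) = k}`. -/
noncomputable def muadm (m : ℕ) (a : α) : ℕ∞ :=
  sSup {r : ℕ∞ | ∃ k ∈ L a, dS (Zk a k) (ZM a (Set.Ico (k - m) k)) = k ∧ r = (k : ℕ∞)}

noncomputable def muadmH (α : Type*) [CancelCommMonoid α] (m : ℕ) : ℕ∞ := ⨆ a : α, muadm m a

/-- `H` is reduced: the only unit is `1`. -/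
def Reduced (α : Type*) [CancelCommMonoid α] : Prop := ∀ a : α, IsUnit a → a = 1

/-- `H` is atomic: every element is a product of atoms. -/
def Atomic (α : Type*) [CancelCommMonoid α] : Prop := ∀ a : α, ∃ z : Fac α, piF z = a

/-- The ascending chain condition on principal ideals. -/
def ACCP (α : Type*) [CancelCommMonoid α] : Prop :=
  ∀ f : ℕ → α, (∀ n, f (n + 1) ∣ f n) → ∃ N, ∀ n, N ≤ n → f N ∣ f n

lemma piF_add (x y : Fac α) : piF (x + y) = piF x * piF y := by
  simp [piF]

lemma cadm_le_muadmH (m : ℕ) (a : α) : cadm m a ≤ muadmH α m := by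
  letI : DecidableEq {u : α // Irreducible u} := Classical.decEq _
  refine sSup_le ?_
  rintro r ⟨k, hk, rfl⟩
  set S : Set ℕ := {n : ℕ | ∃ x ∈ Zk a k, ∃ y ∈ ZM a (Set.Ico (k - m) k), d x y = n}
    with hSdef
  have hdSeq : dS (Zk a k) (ZM a (Set.Ico (k - m) k)) = sInf S := rfl
  rcases S.eq_empty_or_nonempty with hSe | hSne
  · rw [hdSeq, hSe, Nat.sInf_empty]
    exact zero_le
  obtain ⟨z, hz, z', hz', hd⟩ : sInf S ∈ S := Nat.sInf_mem hSne
  obtain ⟨hz1, hz2⟩ := hz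
  obtain ⟨hz'1, hz'2⟩ := hz'
  set x : Fac α := z ∩ z' with hx
  set y : Fac α := z - z' with hy
  set y' : Fac α := z' - z with hy'
  have hzdec : y + x = z := Multiset.sub_add_inter z z'
  have hz'dec : y' + x = z' := by
    rw [hy', hx, Multiset.inter_comm]; exact Multiset.sub_add_inter z' z
  have hb : piF y = piF y' := by
    have h1 : piF y * piF x = a := by rw [← piF_add, hzdec]; exact hz1
    have h2 : piF y' * piF x = a := by rw [← piF_add, hz'dec]; exact hz'1
    exact mul_right_cancel (h1.trans h2.symm)
  set b := piF y with hbdef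
  have hcy : Multiset.card y + Multiset.card x = k := by
    rw [← Multiset.card_add, hzdec, hz2]
  have hcy' : Multiset.card y' + Multiset.card x = Multiset.card z' := by
    rw [← Multiset.card_add, hz'dec]
  have hz'lt : Multiset.card z' < k := hz'2.2
  have hz'ge : k - m ≤ Multiset.card z' := hz'2.1
  have hyy' : Multiset.card y' < Multiset.card y := by omega
  have hdzz' : d z z' = Multiset.card y := by
    show max (Multiset.card (z - z')) (Multiset.card (z' - z)) = Multiset.card y
    rw [← hy, ← hy']
    exact max_eq_left hyy'.le
  have hNy : sInf S = Multiset.card y := hd.symm.trans hdzz'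
  -- the target set for element b
  set T : Set ℕ := {n : ℕ | ∃ w ∈ Zk b (Multiset.card y),
    ∃ w' ∈ ZM b (Set.Ico (Multiset.card y - m) (Multiset.card y)), d w w' = n} with hTdef
  have hyZk : y ∈ Zk b (Multiset.card y) := ⟨rfl, rfl⟩
  have hy'ZM : y' ∈ ZM b (Set.Ico (Multiset.card y - m) (Multiset.card y)) :=
    ⟨hb.symm, by constructor <;> omega⟩
  have hTmem : d y y' ∈ T := ⟨y, hyZk, y', hy'ZM, rfl⟩
  have hdyy'le : d y y' ≤ Multiset.card y := by
    show max (Multiset.card (y - y')) (Multiset.card (y' - y)) ≤ Multiset.card y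
    refine max_le (Multiset.card_le_card (Multiset.sub_le_self _ _)) ?_
    exact le_trans (Multiset.card_le_card (Multiset.sub_le_self _ _)) hyy'.le
  have hTlow : ∀ n ∈ T, Multiset.card y ≤ n := by
    rintro n ⟨w, ⟨hw1, hw2⟩, w', ⟨hw'1, hw'2⟩, rfl⟩
    have hwx : w + x ∈ Zk a k := by
      refine ⟨?_, ?_⟩
      · show piF (w + x) = a
        rw [piF_add, hw1, hbdef, ← piF_add, hzdec]; exact hz1
      · show Multiset.card (w + x) = k
        rw [Multiset.card_add, hw2]; omega
    have hw'x : w' + x ∈ ZM a (Set.Ico (k - m) k) := by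
      refine ⟨?_, ?_⟩
      · show piF (w' + x) = a
        rw [piF_add, hw'1, hbdef, ← piF_add, hzdec]; exact hz1
      · show Multiset.card (w' + x) ∈ Set.Ico (k - m) k
        rw [Multiset.card_add]
        obtain ⟨h1, h2⟩ := hw'2
        constructor <;> omega
    have hdadd : d (w + x) (w' + x) = d w w' := by
      show max (Multiset.card (w + x - (w' + x))) (Multiset.card (w' + x - (w + x)))
        = max (Multiset.card (w - w')) (Multiset.card (w' - w))
      rw [add_tsub_add_eq_tsub_right, add_tsub_add_eq_tsub_right]
    have : sInf S ≤ d (w + x) (w' + x) := Nat.sInf_le ⟨w + x, hwx, w' + x, hw'x, rfl⟩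
    calc Multiset.card y = sInf S := hNy.symm
      _ ≤ d (w + x) (w' + x) := this
      _ = d w w' := hdadd
  have hTinf : sInf T = Multiset.card y :=
    le_antisymm (le_trans (Nat.sInf_le hTmem) hdyy'le) (le_csInf ⟨_, hTmem⟩ hTlow)
  have hdSb : dS (Zk b (Multiset.card y)) (ZM b (Set.Ico (Multiset.card y - m)
      (Multiset.card y))) = Multiset.card y := hTinf
  have hLb : Multiset.card y ∈ L b := ⟨y, rfl, rfl⟩
  have hmu : (Multiset.card y : ℕ∞) ≤ muadm m b :=
    le_sSup ⟨Multiset.card y, hLb, hdSb, rfl⟩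
  calc ((dS (Zk a k) (ZM a (Set.Ico (k - m) k)) : ℕ) : ℕ∞)
      = (Multiset.card y : ℕ∞) := by rw [hdSeq, hNy]
    _ ≤ muadm m b := hmu
    _ ≤ muadmH α m := le_iSup _ b

/-- Let `H` be a reduced, commutative, cancellative, atomic monoid and `m ∈ ℕ`. Then
`c_{ad,m}(a) ≥ μ_{ad,m}(a)` for every `a ∈ H`, and `c_{ad,m}(H) = μ_{ad,m}(H)`. -/
theorem stmt17 {α : Type*} [CancelCommMonoid α]
    (hred : Reduced α) (hatomic : Atomic α) (m : ℕ) (hm : 0 < m) :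
    (∀ a : α, muadm m a ≤ cadm m a) ∧ cadmH α m = muadmH α m := by
  have part1 : ∀ a : α, muadm m a ≤ cadm m a := by
    intro a
    refine sSup_le ?_
    rintro r ⟨k, hk, hdS, rfl⟩
    refine le_sSup ⟨k, hk, ?_⟩
    exact_mod_cast hdS.symm
  refine ⟨part1, le_antisymm ?_ ?_⟩
  · exact iSup_le fun a => cadm_le_muadmH m a
  · refine iSup_le fun a => ?_
    exact le_trans (part1 a) (le_iSup _ a)

end CMR
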